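/- Let ρ_0 = N(0,1) on ℝ, M, L ≥ 2, and let g be as in the counterexample (g'(x) = -Mx for |x|≤L, g'(x)=x∓(M+1)L for x>L resp. x<-L; g''=-M on (-L,L), g''=1 outside [-L,L]). Then the quantity D := -E_{ρ_0}[(-1 + g''(X))²] - 2E_{ρ_0}[g''(X)(-X + g'(X))²] satisfies D ≥ -(M+1)² + 2M(M+1)²E[X²1{|X|≤L}] - 4(M+1)²L²P(X>L) > (M-2)(M+1)² ≥ 0, where X ∼ N(0,1). -/

import Mathlib

open Real MeasureTheory

/-- Standard Gaussian density on `ℝ`. -/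
noncomputable def stdGaussDensity (x : ℝ) : ℝ :=
  (Real.sqrt (2 * Real.pi))⁻¹ * Real.exp (-x ^ 2 / 2)

lemma sqrt2pi_pos : 0 < Real.sqrt (2 * Real.pi) :=
  Real.sqrt_pos.2 (by positivity)

lemma stdGauss_nonneg (x : ℝ) : 0 ≤ stdGaussDensity x := by
  unfold stdGaussDensity; positivity

lemma stdGauss_eq (x : ℝ) :
    stdGaussDensity x = (Real.sqrt (2 * Real.pi))⁻¹ * Real.exp (-(1/2 : ℝ) * x ^ 2) := by
  unfold stdGaussDensity; ring_nf

lemma stdGauss_funeq : stdGaussDensity =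
    fun x => (Real.sqrt (2 * Real.pi))⁻¹ * Real.exp (-(1/2 : ℝ) * x ^ 2) :=
  funext stdGauss_eq

lemma integrable_stdGauss : Integrable stdGaussDensity := by
  rw [stdGauss_funeq]
  exact (integrable_exp_neg_mul_sq (by norm_num : (0:ℝ) < 1/2)).const_mul _

lemma integrable_mul_stdGauss : Integrable (fun x => x * stdGaussDensity x) := by
  have h := (integrable_mul_exp_neg_mul_sq (by norm_num : (0:ℝ) < 1/2)).const_mul
    ((Real.sqrt (2 * Real.pi))⁻¹)
  refine h.congr ?_
  filter_upwards with x
  rw [stdGauss_eq]; ring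

lemma integrable_sq_mul_stdGauss : Integrable (fun x => x ^ 2 * stdGaussDensity x) := by
  have h := (integrable_rpow_mul_exp_neg_mul_sq (by norm_num : (0:ℝ) < 1/2)
    (by norm_num : (-1:ℝ) < 2)).const_mul ((Real.sqrt (2 * Real.pi))⁻¹)
  refine h.congr ?_
  filter_upwards with x
  rw [stdGauss_eq, show ((2:ℝ) : ℝ) = ((2:ℕ) : ℝ) by norm_num, Real.rpow_natCast]
  push_cast
  ring

lemma integral_stdGauss : ∫ x : ℝ, stdGaussDensity x = 1 := by
  rw [stdGauss_funeq]
  rw [MeasureTheory.integral_const_mul, integral_gaussian]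
  rw [show Real.pi / (1/2) = 2 * Real.pi by ring]
  exact inv_mul_cancel₀ (ne_of_gt sqrt2pi_pos)

lemma tendsto_stdGauss_atTop : Filter.Tendsto stdGaussDensity Filter.atTop (nhds 0) := by
  rw [stdGauss_funeq]
  have h2 : Filter.Tendsto (fun x : ℝ => x ^ 2) Filter.atTop Filter.atTop :=
    Filter.tendsto_pow_atTop (by norm_num)
  have h1 : Filter.Tendsto (fun x : ℝ => -(1/2 : ℝ) * x ^ 2) Filter.atTop Filter.atBot :=
    h2.const_mul_atTop_of_neg (by norm_num)
  have h4 : Filter.Tendsto (fun x : ℝ => Real.exp (-(1/2 : ℝ) * x ^ 2))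
      Filter.atTop (nhds 0) := Real.tendsto_exp_atBot.comp h1
  have := h4.const_mul ((Real.sqrt (2 * Real.pi))⁻¹)
  simpa using this

lemma hasDerivAt_negStdGauss (x : ℝ) :
    HasDerivAt (fun y => -stdGaussDensity y) (x * stdGaussDensity x) x := by
  rw [stdGauss_funeq]
  have h1 : HasDerivAt (fun y : ℝ => -(1/2 : ℝ) * y ^ 2) (-(1/2 : ℝ) * (2 * x)) x := by
    simpa using ((hasDerivAt_pow 2 x).const_mul (-(1/2 : ℝ)))
  have h2 := (Real.hasDerivAt_exp (-(1/2 : ℝ) * x ^ 2)).comp x h1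
  have h3 := (h2.const_mul ((Real.sqrt (2 * Real.pi))⁻¹)).neg
  exact h3.congr_deriv (by ring)

lemma integral_Ioi_mul_stdGauss (L : ℝ) :
    ∫ x in Set.Ioi L, x * stdGaussDensity x = stdGaussDensity L := by
  have h := integral_Ioi_of_hasDerivAt_of_tendsto'
    (f := fun y => -stdGaussDensity y) (f' := fun x => x * stdGaussDensity x) (a := L)
    (fun x _ => hasDerivAt_negStdGauss x)
    integrable_mul_stdGauss.integrableOn
    (by simpa using tendsto_stdGauss_atTop.neg)
  rw [h]; ring

lemma tail_bound {L : ℝ} (hL : 2 ≤ L) :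
    L ^ 2 * ∫ x in Set.Ioi L, stdGaussDensity x < 1 / 4 := by
  have hL0 : (0:ℝ) < L := by linarith
  have hT : ∫ x in Set.Ioi L, stdGaussDensity x ≤ L⁻¹ * stdGaussDensity L := by
    rw [← integral_Ioi_mul_stdGauss L, ← MeasureTheory.integral_const_mul]
    refine setIntegral_mono_on integrable_stdGauss.integrableOn
      ((integrable_mul_stdGauss.const_mul L⁻¹).integrableOn) measurableSet_Ioi ?_
    intro x hx
    have hx' : L < x := hx
    have hφ := stdGauss_nonneg x
    rw [show L⁻¹ * (x * stdGaussDensity x) = (x / L) * stdGaussDensity x by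
      field_simp]
    nlinarith [mul_le_mul_of_nonneg_right
      (show (1:ℝ) ≤ x / L from (one_le_div hL0).2 hx'.le) hφ]
  have key : L ^ 2 * ∫ x in Set.Ioi L, stdGaussDensity x ≤ L * stdGaussDensity L := by
    calc L ^ 2 * ∫ x in Set.Ioi L, stdGaussDensity x
        ≤ L ^ 2 * (L⁻¹ * stdGaussDensity L) :=
          mul_le_mul_of_nonneg_left hT (by positivity)
      _ = L * stdGaussDensity L := by field_simp
  refine lt_of_le_of_lt key ?_
  unfold stdGaussDensity
  have e1 : Real.exp (-L ^ 2 / 2) ≤ Real.exp (-L) :=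
    Real.exp_le_exp.2 (by nlinarith)
  have e2 : L * Real.exp (-L) ≤ 2 * Real.exp (-2) := by
    have h5 : L - 2 + 1 ≤ Real.exp (L - 2) := Real.add_one_le_exp _
    have h6 : Real.exp L = Real.exp 2 * Real.exp (L - 2) := by
      rw [← Real.exp_add]; ring_nf
    have hp2 := Real.exp_pos (2:ℝ)
    have hpL := Real.exp_pos L
    rw [Real.exp_neg, Real.exp_neg]
    rw [show L * (Real.exp L)⁻¹ = L / Real.exp L by ring,
      show 2 * (Real.exp 2)⁻¹ = 2 / Real.exp 2 by ring,
      div_le_div_iff₀ hpL hp2]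
    nlinarith
  have e3 : (2.4 : ℝ) ≤ Real.sqrt (2 * Real.pi) := by
    rw [show (2.4:ℝ) = Real.sqrt (2.4 ^ 2) by rw [Real.sqrt_sq (by norm_num)]]
    apply Real.sqrt_le_sqrt
    nlinarith [Real.pi_gt_three]
  have e4 : (4 : ℝ) < Real.exp 2 := by
    have h7 : (2:ℝ) < Real.exp 1 := by
      have := Real.add_one_lt_exp (one_ne_zero); linarith
    have h8 : Real.exp 2 = Real.exp 1 * Real.exp 1 := by
      rw [← Real.exp_add]; norm_num
    nlinarith
  have hs := sqrt2pi_pos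
  have h9 : L * Real.exp (-L ^ 2 / 2) ≤ 2 * Real.exp (-2) :=
    le_trans (mul_le_mul_of_nonneg_left e1 (by linarith)) e2
  have h10 : 2 * Real.exp (-2) < 2/4 := by
    rw [Real.exp_neg]
    have := Real.exp_pos (2:ℝ)
    rw [show 2 * (Real.exp 2)⁻¹ = 2 / Real.exp 2 by ring, div_lt_div_iff₀ this (by norm_num)]
    linarith
  calc L * ((Real.sqrt (2 * Real.pi))⁻¹ * Real.exp (-L ^ 2 / 2))
      = (Real.sqrt (2 * Real.pi))⁻¹ * (L * Real.exp (-L ^ 2 / 2)) := by ring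
    _ ≤ (Real.sqrt (2 * Real.pi))⁻¹ * (2 * Real.exp (-2)) :=
        mul_le_mul_of_nonneg_left h9 (by positivity)
    _ < 1/4 := by
        rw [inv_mul_lt_iff₀ hs]
        have h11 : (1:ℝ)/4 * 2.4 ≤ 1/4 * Real.sqrt (2 * Real.pi) := by nlinarith
        nlinarith

lemma nonneg_of_hasDerivAt (f f' : ℝ → ℝ) (hd : ∀ x : ℝ, HasDerivAt f (f' x) x)
    (h0 : f 0 = 0) (hf' : ∀ x : ℝ, 0 ≤ x → 0 ≤ f' x) : ∀ t : ℝ, 0 ≤ t → 0 ≤ f t := by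
  intro t ht
  have hm : MonotoneOn f (Set.Ici (0:ℝ)) := by
    apply monotoneOn_of_deriv_nonneg (convex_Ici 0)
    · exact fun x _ => (hd x).continuousAt.continuousWithinAt
    · exact fun x _ => (hd x).differentiableAt.differentiableWithinAt
    · intro x hx
      rw [interior_Ici] at hx
      rw [(hd x).deriv]
      exact hf' x (le_of_lt hx)
  have := hm Set.self_mem_Ici ht ht
  linarith

lemma exp_neg_quad_bound (t : ℝ) (ht : 0 ≤ t) : Real.exp (-t) ≤ 1 - t + t ^ 2 / 2 := by
  have hd : ∀ x : ℝ, HasDerivAt (fun y : ℝ => Real.exp (-y)) (-Real.exp (-x)) x := by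
    intro x
    have := (Real.hasDerivAt_exp (-x)).comp x (hasDerivAt_neg x)
    simpa [mul_comm, Function.comp_def] using this
  have key := nonneg_of_hasDerivAt
    (fun y => 1 - y + y ^ 2 / 2 - Real.exp (-y))
    (fun y => -1 + y + Real.exp (-y))
    (fun x => by
      have h1 : HasDerivAt (fun y : ℝ => 1 - y + y ^ 2 / 2) (-1 + x) x := by
        have := ((hasDerivAt_pow 2 x).div_const 2)
        have h2 := ((hasDerivAt_const x (1:ℝ)).sub (hasDerivAt_id x)).add this
        exact h2.congr_deriv (by push_cast; ring)
      have := h1.sub (hd x)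
      exact this.congr_deriv (by ring))
    (by simp)
    (fun x hx => by
      show 0 ≤ -1 + x + Real.exp (-x)
      have := Real.add_one_le_exp (-x)
      linarith)
    t ht
  linarith

lemma exp_neg_cubic_bound (t : ℝ) (ht : 0 ≤ t) :
    1 - t + t ^ 2 / 2 - t ^ 3 / 6 ≤ Real.exp (-t) := by
  have hd : ∀ x : ℝ, HasDerivAt (fun y : ℝ => Real.exp (-y)) (-Real.exp (-x)) x := by
    intro x
    have := (Real.hasDerivAt_exp (-x)).comp x (hasDerivAt_neg x)
    simpa [mul_comm, Function.comp_def] using this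
  have key := nonneg_of_hasDerivAt
    (fun y => Real.exp (-y) - (1 - y + y ^ 2 / 2 - y ^ 3 / 6))
    (fun y => -Real.exp (-y) + 1 - y + y ^ 2 / 2)
    (fun x => by
      have h1 : HasDerivAt (fun y : ℝ => 1 - y + y ^ 2 / 2 - y ^ 3 / 6)
          (-1 + x - x ^ 2 / 2) x := by
        have ha := ((hasDerivAt_pow 2 x).div_const 2)
        have hb := ((hasDerivAt_pow 3 x).div_const 6)
        have h2 := (((hasDerivAt_const x (1:ℝ)).sub (hasDerivAt_id x)).add ha).sub hb
        exact h2.congr_deriv (by push_cast; ring)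
      have := (hd x).sub h1
      exact this.congr_deriv (by ring))
    (by simp)
    (fun x hx => by
      show 0 ≤ -Real.exp (-x) + 1 - x + x ^ 2 / 2
      have := exp_neg_quad_bound x hx
      linarith)
    t ht
  linarith

lemma poly_integral :
    ∫ x in (-2:ℝ)..2, (1 - x ^ 2 / 2 + x ^ 4 / 8 - x ^ 6 / 48) = 76 / 35 := by
  have hd : ∀ x ∈ Set.uIcc (-2:ℝ) 2, HasDerivAt
      (fun y : ℝ => y - y ^ 3 / 6 + y ^ 5 / 40 - y ^ 7 / 336)
      (1 - x ^ 2 / 2 + x ^ 4 / 8 - x ^ 6 / 48) x := by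
    intro x _
    have h := (((hasDerivAt_id x).sub ((hasDerivAt_pow 3 x).div_const 6)).add
      ((hasDerivAt_pow 5 x).div_const 40)).sub ((hasDerivAt_pow 7 x).div_const 336)
    exact h.congr_deriv (by push_cast; ring)
  rw [intervalIntegral.integral_eq_sub_of_hasDerivAt hd (by
    apply Continuous.intervalIntegrable; continuity)]
  norm_num

lemma exp_integral_lower :
    (76:ℝ) / 35 ≤ ∫ x in (-2:ℝ)..2, Real.exp (-x ^ 2 / 2) := by
  rw [← poly_integral]
  apply intervalIntegral.integral_mono_on (by norm_num)
  · apply Continuous.intervalIntegrable; continuity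
  · apply Continuous.intervalIntegrable; continuity
  · intro x _
    have h := exp_neg_cubic_bound (x ^ 2 / 2) (by positivity)
    have he : Real.exp (-x ^ 2 / 2) = Real.exp (-(x ^ 2 / 2)) := by rw [neg_div]
    rw [he]
    nlinarith [h]

lemma continuous_stdGauss : Continuous stdGaussDensity := by
  unfold stdGaussDensity
  continuity

lemma hasDerivAt_G (x : ℝ) :
    HasDerivAt (fun y : ℝ => -(y * stdGaussDensity y))
      (x ^ 2 * stdGaussDensity x - stdGaussDensity x) x := by
  have hφ : HasDerivAt stdGaussDensity (-(x * stdGaussDensity x)) x := by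
    have := (hasDerivAt_negStdGauss x).neg
    simpa [Pi.neg_def] using this
  have h := ((hasDerivAt_id x).mul hφ).neg
  exact h.congr_deriv (by simp only [id_eq]; ring)

lemma integral_parts :
    ∫ x in (-2:ℝ)..2, (x ^ 2 * stdGaussDensity x - stdGaussDensity x)
      = -4 * stdGaussDensity 2 := by
  have heven : stdGaussDensity (-2) = stdGaussDensity 2 := by
    unfold stdGaussDensity; norm_num
  rw [intervalIntegral.integral_eq_sub_of_hasDerivAt (fun x _ => hasDerivAt_G x) (by
    apply Continuous.intervalIntegrable
    exact ((continuous_pow 2).mul continuous_stdGauss).sub continuous_stdGauss)]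
  rw [heven]
  ring

lemma secondMoment_Icc2 :
    1 / 2 < ∫ x in Set.Icc (-2:ℝ) 2, x ^ 2 * stdGaussDensity x := by
  rw [MeasureTheory.integral_Icc_eq_integral_Ioc,
    ← intervalIntegral.integral_of_le (by norm_num : (-2:ℝ) ≤ 2)]
  have hint1 : IntervalIntegrable (fun x => x ^ 2 * stdGaussDensity x -
      stdGaussDensity x) volume (-2) 2 := by
    apply Continuous.intervalIntegrable
    exact ((continuous_pow 2).mul continuous_stdGauss).sub continuous_stdGauss
  have hint2 : IntervalIntegrable stdGaussDensity volume (-2) 2 :=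
    continuous_stdGauss.intervalIntegrable _ _
  have hsplit : ∫ x in (-2:ℝ)..2, x ^ 2 * stdGaussDensity x
      = (∫ x in (-2:ℝ)..2, (x ^ 2 * stdGaussDensity x - stdGaussDensity x))
        + ∫ x in (-2:ℝ)..2, stdGaussDensity x := by
    rw [← intervalIntegral.integral_add hint1 hint2]
    congr 1
    funext x
    ring
  have hphi : ∫ x in (-2:ℝ)..2, stdGaussDensity x
      = (Real.sqrt (2 * Real.pi))⁻¹ * ∫ x in (-2:ℝ)..2, Real.exp (-x ^ 2 / 2) := by
    rw [← intervalIntegral.integral_const_mul]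
    rfl
  rw [hsplit, integral_parts, hphi]
  have hE := exp_integral_lower
  have hs := sqrt2pi_pos
  have hsq : Real.sqrt (2 * Real.pi) < 2.51 := by
    rw [show (2.51:ℝ) = Real.sqrt (2.51 ^ 2) by rw [Real.sqrt_sq]; norm_num]
    apply Real.sqrt_lt_sqrt (by positivity)
    nlinarith [Real.pi_lt_d6]
  have hexp : (7.38:ℝ) < Real.exp 2 := by
    have h1 : (2.7182818283:ℝ) < Real.exp 1 := Real.exp_one_gt_d9
    have h2 : Real.exp 2 = Real.exp 1 * Real.exp 1 := by
      rw [← Real.exp_add]; norm_num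
    nlinarith
  have hg2 : stdGaussDensity 2 = (Real.sqrt (2 * Real.pi))⁻¹ * Real.exp (-2) := by
    unfold stdGaussDensity
    norm_num
  rw [hg2]
  have hexpneg : Real.exp (-2) < 1 / 7.38 := by
    rw [Real.exp_neg]
    rw [inv_lt_comm₀ (Real.exp_pos 2) (by norm_num)]
    · linarith
  have hkey : (76:ℝ)/35 - 4 * Real.exp (-2) > Real.sqrt (2 * Real.pi) / 2 := by
    nlinarith
  have hfin : (Real.sqrt (2 * Real.pi))⁻¹ *
      ((∫ x in (-2:ℝ)..2, Real.exp (-x ^ 2 / 2)) - 4 * Real.exp (-2)) > 1/2 := by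
    rw [gt_iff_lt, show (1:ℝ)/2 = (Real.sqrt (2 * Real.pi))⁻¹ *
      (Real.sqrt (2 * Real.pi) / 2) by field_simp]
    apply mul_lt_mul_of_pos_left _ (by positivity)
    have hEimp : (∫ x in (-2:ℝ)..2, Real.exp (-x ^ 2 / 2)) - 4 * Real.exp (-2)
        ≥ 76/35 - 4 * Real.exp (-2) := by linarith
    linarith
  nlinarith [hfin]

lemma secondMoment_lower {L : ℝ} (hL : 2 ≤ L) :
    1 / 2 < ∫ x in Set.Icc (-L) L, x ^ 2 * stdGaussDensity x := by
  refine lt_of_lt_of_le secondMoment_Icc2 ?_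
  apply setIntegral_mono_set integrable_sq_mul_stdGauss.integrableOn
  · exact Filter.Eventually.of_forall fun x => by
      have := stdGauss_nonneg x; positivity
  · exact (Set.Icc_subset_Icc (by linarith) hL).eventuallyLE

/-- The time derivative at `t = 0` of `FI(ρ_t‖ν_t)` along the heat flow in the
DPI counterexample: `D = -E[(-1+g''(X))²] - 2E[g''(X)(-X+g'(X))²]` with
`X ∼ N(0,1)` satisfies
`D ≥ -(M+1)² + 2M(M+1)² E[X²1{|X|≤L}] - 4(M+1)²L² P(X>L) > (M-2)(M+1)² ≥ 0`. -/
theorem counterexample_fisherInfo_derivative_positive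
    (M L : ℝ) (hM : 2 ≤ M) (hL : 2 ≤ L)
    (g' g'' : ℝ → ℝ)
    (hg' : ∀ x : ℝ, g' x =
      if |x| ≤ L then -M * x
      else if L < x then x - (M + 1) * L
      else x + (M + 1) * L)
    (hg'' : ∀ x : ℝ, g'' x = if |x| ≤ L then -M else 1)
    (D : ℝ)
    (hD : D = -(∫ x : ℝ, stdGaussDensity x * (-1 + g'' x) ^ 2)
        - 2 * ∫ x : ℝ, stdGaussDensity x * (g'' x * (-x + g' x) ^ 2)) :
    D ≥ -(M + 1) ^ 2
        + 2 * M * (M + 1) ^ 2 * (∫ x in Set.Icc (-L) L, x ^ 2 * stdGaussDensity x)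
        - 4 * (M + 1) ^ 2 * L ^ 2 * (∫ x in Set.Ioi L, stdGaussDensity x) ∧
    -(M + 1) ^ 2
        + 2 * M * (M + 1) ^ 2 * (∫ x in Set.Icc (-L) L, x ^ 2 * stdGaussDensity x)
        - 4 * (M + 1) ^ 2 * L ^ 2 * (∫ x in Set.Ioi L, stdGaussDensity x)
      > (M - 2) * (M + 1) ^ 2 ∧
    (M - 2) * (M + 1) ^ 2 ≥ 0 := by
  have hL0 : (0:ℝ) < L := by linarith
  set P : ℝ := ∫ x in Set.Icc (-L) L, stdGaussDensity x with hP_def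
  set I2 : ℝ := ∫ x in Set.Icc (-L) L, x ^ 2 * stdGaussDensity x with hI2_def
  set T : ℝ := ∫ x in Set.Ioi L, stdGaussDensity x with hT_def
  -- Step 1: first integral
  have h1 : (∫ x : ℝ, stdGaussDensity x * (-1 + g'' x) ^ 2) = (M + 1) ^ 2 * P := by
    have heq : (fun x => stdGaussDensity x * (-1 + g'' x) ^ 2)
        = (Set.Icc (-L) L).indicator (fun x => (M + 1) ^ 2 * stdGaussDensity x) := by
      funext x
      rw [hg'']
      by_cases hx : |x| ≤ L
      · rw [if_pos hx, Set.indicator_of_mem (Set.mem_Icc.mpr (abs_le.1 hx))]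
        ring
      · rw [if_neg hx, Set.indicator_of_notMem
          (fun h => hx (abs_le.2 (Set.mem_Icc.1 h)))]
        norm_num
    rw [heq, MeasureTheory.integral_indicator measurableSet_Icc,
      MeasureTheory.integral_const_mul]
  -- Step 2: second integral
  have h2 : (∫ x : ℝ, stdGaussDensity x * (g'' x * (-x + g' x) ^ 2))
      = -M * (M + 1) ^ 2 * I2
        + (M + 1) ^ 2 * L ^ 2 * ∫ x in (Set.Icc (-L) L)ᶜ, stdGaussDensity x := by
    have heq : (fun x => stdGaussDensity x * (g'' x * (-x + g' x) ^ 2))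
        = fun x => (Set.Icc (-L) L).indicator
            (fun x => -M * (M + 1) ^ 2 * (x ^ 2 * stdGaussDensity x)) x
          + (Set.Icc (-L) L)ᶜ.indicator
            (fun x => (M + 1) ^ 2 * L ^ 2 * stdGaussDensity x) x := by
      funext x
      rw [hg'', hg']
      by_cases hx : |x| ≤ L
      · have hmem : x ∈ Set.Icc (-L) L := Set.mem_Icc.mpr (abs_le.1 hx)
        rw [if_pos hx, if_pos hx, Set.indicator_of_mem hmem,
          Set.indicator_of_notMem (by simpa using hmem)]
        ring
      · have hmem : x ∉ Set.Icc (-L) L := fun h => hx (abs_le.2 (Set.mem_Icc.1 h))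
        rw [if_neg hx, if_neg hx, Set.indicator_of_notMem hmem,
          Set.indicator_of_mem (Set.mem_compl hmem)]
        by_cases hxL : L < x
        · rw [if_pos hxL]; ring
        · rw [if_neg hxL]; ring
    have hint1 : Integrable ((Set.Icc (-L) L).indicator
        (fun x => -M * (M + 1) ^ 2 * (x ^ 2 * stdGaussDensity x))) :=
      (integrable_sq_mul_stdGauss.const_mul _).indicator measurableSet_Icc
    have hint2 : Integrable ((Set.Icc (-L) L)ᶜ.indicator
        (fun x => (M + 1) ^ 2 * L ^ 2 * stdGaussDensity x)) :=
      (integrable_stdGauss.const_mul _).indicator measurableSet_Icc.compl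
    rw [heq, MeasureTheory.integral_add hint1 hint2,
      MeasureTheory.integral_indicator measurableSet_Icc,
      MeasureTheory.integral_indicator measurableSet_Icc.compl,
      MeasureTheory.integral_const_mul, MeasureTheory.integral_const_mul]
  -- Step 3: complement integral equals 2T
  have h3 : (∫ x in (Set.Icc (-L) L)ᶜ, stdGaussDensity x) = 2 * T := by
    rw [show (Set.Icc (-L) L)ᶜ = Set.Iio (-L) ∪ Set.Ioi L by
      ext x
      simp only [Set.mem_compl_iff, Set.mem_Icc, not_and_or, not_le, Set.mem_union,
        Set.mem_Iio, Set.mem_Ioi]]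
    rw [MeasureTheory.setIntegral_union (by
        rw [Set.disjoint_left]
        intro x hx1 hx2
        simp only [Set.mem_Iio, Set.mem_Ioi] at hx1 hx2
        linarith) measurableSet_Ioi
      integrable_stdGauss.integrableOn integrable_stdGauss.integrableOn]
    have hrefl : (∫ x in Set.Iio (-L), stdGaussDensity x) = T := by
      rw [← MeasureTheory.integral_Iic_eq_integral_Iio,
        ← integral_comp_neg_Ioi L stdGaussDensity]
      simp only [show ∀ x : ℝ, stdGaussDensity (-x) = stdGaussDensity x from
        fun x => by unfold stdGaussDensity; ring_nf]
      rfl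
    rw [hrefl]
    ring
  -- Step 4: P ≤ 1
  have hP1 : P ≤ 1 := by
    rw [hP_def, ← integral_stdGauss]
    exact setIntegral_le_integral integrable_stdGauss
      (Filter.Eventually.of_forall fun x => stdGauss_nonneg x)
  have hI2lb : 1 / 2 < I2 := secondMoment_lower hL
  have hTub : L ^ 2 * T < 1 / 4 := tail_bound hL
  have hDval : D = -((M + 1) ^ 2 * P) + 2 * M * (M + 1) ^ 2 * I2
      - 4 * (M + 1) ^ 2 * L ^ 2 * T := by
    rw [hD, h1, h2, h3]
    ring
  have hsq : (0:ℝ) < (M + 1) ^ 2 := by positivity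
  refine ⟨?_, ?_, ?_⟩
  · rw [hDval]
    nlinarith
  · have hpos : (0:ℝ) < 2 * M * (I2 - 1/2) + (1 - 4 * (L ^ 2 * T)) := by
      nlinarith
    nlinarith [mul_pos hsq hpos]
  · exact mul_nonneg (by linarith) (sq_nonneg _)
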